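/- Let G be a graph without a 2-factor and let (S,T) be a minimum barrier with h_G(S,T) smallest among minimum barriers. If v ∈ T satisfies |𝒞_v| ≥ 2, then every component D ∈ 𝒞_{1v} has at least 2 vertices. -/

import Mathlib

open SimpleGraph

namespace VizingTwoFactor

variable {V : Type*}

/-- The degree of a vertex, as the `ncard` of its neighbor set. -/
noncomputable def ndeg (G : SimpleGraph V) (v : V) : ℕ :=
  (G.neighborSet v).ncard

/-- `G` is bipartite with parts `X` and `T`. -/
def IsBipartiteWith (G : SimpleGraph V) (X T : Set V) : Prop :=
  Disjoint X T ∧ ∀ u v : V, G.Adj u v → (u ∈ X ∧ v ∈ T) ∨ (u ∈ T ∧ v ∈ X)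

/-- The set of neighbors of a set of vertices. -/
def NSet (G : SimpleGraph V) (A : Set V) : Set V :=
  {v | ∃ a ∈ A, G.Adj a v}

/-- `G` has a matching saturating the vertex set `T`. -/
def HasMatchingSaturating (G : SimpleGraph V) (T : Set V) : Prop :=
  ∃ M : G.Subgraph, M.IsMatching ∧ T ⊆ M.verts

/-- Number of (ordered) adjacent pairs with first coordinate in `A` and second in `B`;
for disjoint `A`, `B` this is the number of edges between `A` and `B`. -/
noncomputable def eBetween (G : SimpleGraph V) (A B : Set V) : ℕ :=
  {p : V × V | p.1 ∈ A ∧ p.2 ∈ B ∧ G.Adj p.1 p.2}.ncard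

/-- Number of neighbors of `v` inside `A`. -/
noncomputable def degIn (G : SimpleGraph V) (A : Set V) (v : V) : ℕ :=
  (G.neighborSet v ∩ A).ncard

/-- The vertex set (in `V`) of a connected component of an induced subgraph. -/
def csupp (G : SimpleGraph V) (U : Set V) (C : (G.induce U).ConnectedComponent) : Set V :=
  Subtype.val '' C.supp

/-- The odd components of `G − (S ∪ T)` w.r.t. `(S,T)`: components sending an odd
number of edges to `T`. -/
noncomputable def oddComps (G : SimpleGraph V) (S T : Set V) :
    Set ((G.induce (S ∪ T)ᶜ).ConnectedComponent) :=
  {C | Odd (eBetween G (csupp G (S ∪ T)ᶜ C) T)}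

/-- `h_G(S,T)`: the number of odd components. -/
noncomputable def hNum (G : SimpleGraph V) (S T : Set V) : ℕ :=
  (oddComps G S T).ncard

/-- `δ_G(S,T) = 2|S| + Σ_{v∈T} deg_{G−S}(v) − 2|T| − h_G(S,T)`. -/
noncomputable def deltaST (G : SimpleGraph V) (S T : Set V) : ℤ :=
  2 * S.ncard + (∑ᶠ v ∈ T, (degIn G Sᶜ v : ℤ)) - 2 * T.ncard - hNum G S T

/-- A barrier. -/
def IsBarrier (G : SimpleGraph V) (S T : Set V) : Prop :=
  Disjoint S T ∧ deltaST G S T ≤ -2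

/-- A minimum barrier: minimizes `|S ∪ T|` among barriers. -/
def IsMinBarrier (G : SimpleGraph V) (S T : Set V) : Prop :=
  IsBarrier G S T ∧ ∀ S' T' : Set V, IsBarrier G S' T' → (S ∪ T).ncard ≤ (S' ∪ T').ncard

/-- `G` has a 2-factor: a spanning subgraph in which every vertex has degree 2. -/
def HasTwoFactor (G : SimpleGraph V) : Prop :=
  ∃ H : SimpleGraph V, H ≤ G ∧ ∀ v : V, ndeg H v = 2

/-- `G` has a proper edge coloring with `k` colors. -/
def HasEdgeColoring (G : SimpleGraph V) (k : ℕ) : Prop :=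
  ∃ f : G.edgeSet → Fin k, ∀ e₁ e₂ : G.edgeSet, e₁ ≠ e₂ →
    (∃ v : V, v ∈ (e₁ : Sym2 V) ∧ v ∈ (e₂ : Sym2 V)) → f e₁ ≠ f e₂

/-- The chromatic index `χ'(G)`. -/
noncomputable def chromIdx (G : SimpleGraph V) : ℕ :=
  sInf {k | HasEdgeColoring G k}

/-- `Δ` is the maximum degree of `G`. -/
def IsMaxDegree (G : SimpleGraph V) (Δ : ℕ) : Prop :=
  (∀ v : V, ndeg G v ≤ Δ) ∧ ∃ v : V, ndeg G v = Δ

/-- `G` is `Δ`-critical: no isolated vertices, maximum degree `Δ`, `χ'(G) = Δ + 1`, and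
`χ'(G − e) = Δ` for every edge `e`. -/
def IsDeltaCritical (G : SimpleGraph V) (Δ : ℕ) : Prop :=
  (∀ v : V, ∃ u : V, G.Adj v u) ∧ IsMaxDegree G Δ ∧ chromIdx G = Δ + 1 ∧
    ∀ e ∈ G.edgeSet, chromIdx (G.deleteEdges {e}) = Δ

/-- `T` is an independent set in `G`. -/
def IsIndep (G : SimpleGraph V) (T : Set V) : Prop :=
  ∀ u ∈ T, ∀ v ∈ T, ¬ G.Adj u v

/-- The bipartite graph `H*` consisting of the edges of `G` between `V(G) \ T` and `T`. -/
def betweenGraph (G : SimpleGraph V) (T : Set V) : SimpleGraph V where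
  Adj u v := G.Adj u v ∧ ((u ∉ T ∧ v ∈ T) ∨ (u ∈ T ∧ v ∉ T))
  symm := ⟨fun u v h => ⟨h.1.symm, h.2.elim (fun h' => Or.inr ⟨h'.2, h'.1⟩)
    (fun h' => Or.inl ⟨h'.2, h'.1⟩)⟩⟩
  loopless := ⟨fun u h => G.loopless.irrefl u h.1⟩

/-- reach set of `u` within `W` -/
def rs (G : SimpleGraph V) (W : Set V) (u : V) : Set V :=
  {w | ∃ (hu : u ∈ W) (hw : w ∈ W), (G.induce W).Reachable ⟨u, hu⟩ ⟨w, hw⟩}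

lemma rs_subset (G : SimpleGraph V) (W : Set V) (u : V) : rs G W u ⊆ W := by
  rintro w ⟨hu, hw, -⟩; exact hw

lemma mem_rs_self (G : SimpleGraph V) {W : Set V} {u : V} (hu : u ∈ W) : u ∈ rs G W u :=
  ⟨hu, hu, Reachable.refl _⟩

lemma rs_comm {G : SimpleGraph V} {W : Set V} {u w : V} (h : w ∈ rs G W u) : u ∈ rs G W w := by
  obtain ⟨hu, hw, r⟩ := h; exact ⟨hw, hu, r.symm⟩

lemma rs_eq_of_mem {G : SimpleGraph V} {W : Set V} {u w : V} (h : w ∈ rs G W u) :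
    rs G W w = rs G W u := by
  obtain ⟨hu, hw, r⟩ := h
  ext x
  constructor
  · rintro ⟨h1, hx, r2⟩; exact ⟨hu, hx, r.trans r2⟩
  · rintro ⟨h1, hx, r2⟩; exact ⟨hw, hx, r.symm.trans r2⟩

/-- inclusion hom between induced subgraphs -/
def homOfLE (G : SimpleGraph V) {A B : Set V} (hAB : A ⊆ B) : G.induce A →g G.induce B :=
  ⟨Set.inclusion hAB, fun {a b} h => h⟩

/-- transfer a reachability to a larger vertex set -/
lemma reach_mono (G : SimpleGraph V) {A B : Set V} (hAB : A ⊆ B) {u w : V}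
    (hu : u ∈ A) (hw : w ∈ A)
    (r : (G.induce A).Reachable ⟨u, hu⟩ ⟨w, hw⟩) :
    (G.induce B).Reachable ⟨u, hAB hu⟩ ⟨w, hAB hw⟩ :=
  r.map (homOfLE G hAB)

lemma rs_mono (G : SimpleGraph V) {A B : Set V} (hAB : A ⊆ B) (u : V) :
    rs G A u ⊆ rs G B u := by
  rintro w ⟨hu, hw, r⟩; exact ⟨hAB hu, hAB hw, reach_mono G hAB hu hw r⟩

/-- a walk avoiding `x` descends to `A \ {x}` -/
lemma walk_avoid (G : SimpleGraph V) {A : Set V} {x : V} (hx : x ∈ A) :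
    ∀ {a b : ↥A} (_ : (G.induce A).Walk a b),
      ¬ (G.induce A).Reachable a ⟨x, hx⟩ →
      ∃ (ha : (a : V) ∈ A \ {x}) (hb : (b : V) ∈ A \ {x}),
        (G.induce (A \ {x})).Reachable ⟨(a : V), ha⟩ ⟨(b : V), hb⟩ := by
  intro a b p
  induction p with
  | @nil u =>
      intro hr
      have ha : (u : V) ∈ A \ {x} := by
        refine ⟨u.2, fun hax => hr ?_⟩
        have : u = (⟨x, hx⟩ : ↥A) := Subtype.ext hax
        rw [this]
      exact ⟨ha, ha, Reachable.refl _⟩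
  | @cons a y b h p ih =>
      intro hr
      have hyx : ¬ (G.induce A).Reachable y ⟨x, hx⟩ := fun r => hr ((Adj.reachable h).trans r)
      obtain ⟨hy, hb, r⟩ := ih hyx
      have ha : (a : V) ∈ A \ {x} := by
        refine ⟨a.2, fun hax => hr ?_⟩
        have : a = (⟨x, hx⟩ : ↥A) := Subtype.ext hax
        rw [this]
      refine ⟨ha, hb, (Adj.reachable ?_).trans r⟩
      exact (h : G.Adj (a : V) (y : V))

/-- from a walk to `x`, extract a neighbor of `x` reachable in `A \ {x}` -/
lemma walk_attach (G : SimpleGraph V) {A : Set V} {x : V} (hx : x ∈ A) :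
    ∀ {a b : ↥A} (_ : (G.induce A).Walk a b), b = ⟨x, hx⟩ → a ≠ b →
      ∃ z : V, z ∈ A \ {x} ∧ G.Adj x z ∧
        ∃ (ha : (a : V) ∈ A \ {x}) (hz : z ∈ A \ {x}),
          (G.induce (A \ {x})).Reachable ⟨(a : V), ha⟩ ⟨z, hz⟩ := by
  intro a b p
  induction p with
  | @nil u => intro hb hab; exact absurd rfl hab
  | @cons a y b h p ih =>
      intro hb hab
      subst hb
      have hax : (a : V) ≠ x := fun hax => hab (Subtype.ext hax)
      have ha : (a : V) ∈ A \ {x} := ⟨a.2, hax⟩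
      by_cases hy : y = ⟨x, hx⟩
      · subst hy
        refine ⟨a, ha, ?_, ha, ha, Reachable.refl _⟩
        exact ((h : G.Adj (a : V) x)).symm
      · obtain ⟨z, hz1, hz2, hy2, hz3, r⟩ := ih rfl hy
        refine ⟨z, hz1, hz2, ha, hz3, (Adj.reachable ?_).trans r⟩
        exact (h : G.Adj (a : V) (y : V))

lemma adj_mem_rs (G : SimpleGraph V) {A : Set V} {u w : V} (hu : u ∈ A) (hw : w ∈ A)
    (h : G.Adj u w) : w ∈ rs G A u :=
  ⟨hu, hw, Adj.reachable (h : G.Adj ((⟨u, hu⟩ : ↥A) : V) ((⟨w, hw⟩ : ↥A) : V))⟩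

lemma rs_congr (G : SimpleGraph V) {A B : Set V} (h : A = B) (u : V) :
    rs G A u = rs G B u := by subst h; rfl

lemma rs_avoid (G : SimpleGraph V) {A : Set V} {x u w : V} (hx : x ∈ A)
    (hxu : x ∉ rs G A u) (hw : w ∈ rs G A u) : w ∈ rs G (A \ {x}) u := by
  obtain ⟨hu, hwA, r⟩ := hw
  have hr : ¬ (G.induce A).Reachable ⟨u, hu⟩ ⟨x, hx⟩ := fun r2 => hxu ⟨hu, hx, r2⟩
  obtain ⟨p⟩ := r
  obtain ⟨ha, hb, r3⟩ := walk_avoid G hx p hr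
  exact ⟨ha, hb, r3⟩

lemma rs_attach (G : SimpleGraph V) {A : Set V} {x u : V} (hx : x ∈ A)
    (hu : u ∈ rs G A x) (hux : u ≠ x) :
    ∃ z ∈ rs G (A \ {x}) u, G.Adj x z := by
  obtain ⟨hxA, huA, r⟩ := hu
  obtain ⟨p⟩ := r.symm
  obtain ⟨z, hz1, hz2, ha, hz3, r2⟩ :=
    walk_attach G hx p rfl (fun h => hux (congrArg Subtype.val h))
  exact ⟨z, ⟨ha, hz3, r2⟩, hz2⟩

section swap
variable (G : SimpleGraph V) {W : Set V} {c v : V}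

lemma c_not_mem_rs (hiso : rs G W c = {c}) {u : V} (hu : u ∈ W \ {c}) :
    c ∉ rs G W u := by
  intro hc
  have := rs_eq_of_mem hc
  rw [hiso] at this
  have : u ∈ rs G W u := mem_rs_self G hu.1
  rw [← rs_eq_of_mem hc, hiso] at this
  exact hu.2 this

lemma c_mem_W (hiso : rs G W c = {c}) : c ∈ W :=
  rs_subset G W c (by rw [hiso]; exact rfl)

lemma rs_erase_c (hiso : rs G W c = {c}) {u : V} (hu : u ∈ W \ {c}) :
    rs G (W \ {c}) u = rs G W u := by
  apply Set.Subset.antisymm (rs_mono G Set.diff_subset u)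
  intro w hw
  exact rs_avoid G (c_mem_W G hiso) (c_not_mem_rs G hiso hu) hw

section
variable (hvW : v ∉ W) (hiso : rs G W c = {c})
include hvW hiso

lemma W'_erase_v : (insert v (W \ {c})) \ {v} = W \ {c} := by
  ext x
  simp only [Set.mem_diff, Set.mem_insert_iff, Set.mem_singleton_iff]
  constructor
  · rintro ⟨h1 | h1, h2⟩
    · exact absurd h1 h2
    · exact h1
  · rintro ⟨h1, h2⟩
    exact ⟨Or.inr ⟨h1, h2⟩, fun hx => hvW (hx ▸ h1)⟩

/-- stable components: those not touching `v` keep their reach-set -/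
lemma rs_stable {u : V} (hu : u ∈ W \ {c})
    (hv : v ∉ rs G (insert v (W \ {c})) u) :
    rs G (insert v (W \ {c})) u = rs G W u := by
  rw [← rs_erase_c G hiso hu]
  apply Set.Subset.antisymm
  · intro w hw
    have := rs_avoid G (Set.mem_insert v _) hv hw
    rwa [rs_congr G (W'_erase_v G hvW hiso) u] at this
  · exact rs_mono G (Set.subset_insert _ _) u

/-- touching `v` is equivalent to `rs G W u` meeting `N(v)` -/
lemma touch_iff {u : V} (hu : u ∈ W \ {c}) :
    v ∈ rs G (insert v (W \ {c})) u ↔ (rs G W u ∩ G.neighborSet v).Nonempty := by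
  have huv : u ≠ v := fun h => hvW (h ▸ hu.1)
  constructor
  · intro hv
    obtain ⟨z, hz, hadj⟩ := rs_attach G (Set.mem_insert v _) (rs_comm hv) huv
    rw [rs_congr G (W'_erase_v G hvW hiso) u, rs_erase_c G hiso hu] at hz
    exact ⟨z, hz, hadj⟩
  · rintro ⟨z, hz, hadj⟩
    have hzW : z ∈ rs G (W \ {c}) u := by rwa [rs_erase_c G hiso hu]
    have hz' : z ∈ rs G (insert v (W \ {c})) u := rs_mono G (Set.subset_insert _ _) u hzW
    have hvz : v ∈ rs G (insert v (W \ {c})) z :=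
      adj_mem_rs G (rs_subset G _ _ hz') (Set.mem_insert v _) (hadj : G.Adj v z).symm
    rw [rs_eq_of_mem hz'] at hvz
    exact hvz

/-- the reach-set of `v` in the swapped set -/
lemma rs_K : rs G (insert v (W \ {c})) v =
    insert v {u | u ∈ W \ {c} ∧ (rs G W u ∩ G.neighborSet v).Nonempty} := by
  ext u
  simp only [Set.mem_insert_iff, Set.mem_setOf_eq]
  constructor
  · intro hu
    by_cases huv : u = v
    · exact Or.inl huv
    · have huW : u ∈ W \ {c} := by
        have := rs_subset G _ _ hu
        rcases this with h | h
        · exact absurd h huv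
        · exact h
      refine Or.inr ⟨huW, ?_⟩
      rw [← touch_iff G hvW hiso huW]
      exact rs_comm hu
  · rintro (rfl | ⟨hu, ht⟩)
    · exact mem_rs_self G (Set.mem_insert _ _)
    · exact rs_comm ((touch_iff G hvW hiso hu).2 ht)

end
end swap

/-- the collection of component supports -/
def Supps (G : SimpleGraph V) (W : Set V) : Set (Set V) := {A | ∃ u ∈ W, rs G W u = A}

lemma rs_mem_supps (G : SimpleGraph V) {W : Set V} {u : V} (hu : u ∈ W) :
    rs G W u ∈ Supps G W := ⟨u, hu, rfl⟩

lemma supps_subset (G : SimpleGraph V) {W : Set V} {A : Set V} (hA : A ∈ Supps G W) :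
    A ⊆ W := by obtain ⟨u, hu, rfl⟩ := hA; exact rs_subset G W u

lemma supps_nonempty (G : SimpleGraph V) {W : Set V} {A : Set V} (hA : A ∈ Supps G W) :
    A.Nonempty := by obtain ⟨u, hu, rfl⟩ := hA; exact ⟨u, mem_rs_self G hu⟩

lemma rs_eq_of_mem_supps (G : SimpleGraph V) {W : Set V} {A : Set V} (hA : A ∈ Supps G W)
    {u : V} (hu : u ∈ A) : rs G W u = A := by
  obtain ⟨w, hw, rfl⟩ := hA; exact rs_eq_of_mem hu

lemma supps_pd (G : SimpleGraph V) (W : Set V) :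
    (Supps G W).PairwiseDisjoint id := by
  intro A hA B hB hAB
  simp only [Function.onFun, id_eq]
  rw [Set.disjoint_left]
  intro x hxA hxB
  exact hAB ((rs_eq_of_mem_supps G hA hxA).symm.trans (rs_eq_of_mem_supps G hB hxB))

lemma sUnion_supps (G : SimpleGraph V) (W : Set V) : ⋃₀ Supps G W = W := by
  apply Set.Subset.antisymm
  · intro x hx
    obtain ⟨A, hA, hxA⟩ := hx
    exact supps_subset G hA hxA
  · intro x hx
    exact ⟨rs G W x, rs_mem_supps G hx, mem_rs_self G hx⟩

section swap2
variable (G : SimpleGraph V) {W : Set V} {c v : V}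
  (hvW : v ∉ W) (hiso : rs G W c = {c})
include hvW hiso

/-- classification of the supports after the swap -/
lemma supps_swap :
    Supps G (insert v (W \ {c})) = insert (rs G (insert v (W \ {c})) v)
      {A ∈ Supps G W | A ∩ G.neighborSet v = ∅ ∧ A ≠ {c}} := by
  ext A
  simp only [Set.mem_insert_iff, Set.mem_setOf_eq]
  constructor
  · rintro ⟨u, hu, rfl⟩
    rcases hu with rfl | huW
    · exact Or.inl rfl
    · by_cases hv : v ∈ rs G (insert v (W \ {c})) u
      · exact Or.inl (rs_eq_of_mem hv).symm
      · right
        rw [rs_stable G hvW hiso huW hv]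
        refine ⟨rs_mem_supps G huW.1, ?_, ?_⟩
        · rw [← Set.not_nonempty_iff_eq_empty]
          rw [touch_iff G hvW hiso huW] at hv
          exact hv
        · intro h
          have := mem_rs_self G huW.1
          rw [h] at this
          exact huW.2 this
  · rintro (rfl | ⟨⟨u, hu, rfl⟩, hAv, hAc⟩)
    · exact rs_mem_supps G (Set.mem_insert _ _)
    · have huc : u ∈ W \ {c} := by
        refine ⟨hu, fun huc => hAc ?_⟩
        rw [Set.mem_singleton_iff] at huc
        rw [huc, hiso]
      have hv : v ∉ rs G (insert v (W \ {c})) u := by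
        rw [touch_iff G hvW hiso huc]
        rw [Set.not_nonempty_iff_eq_empty]
        exact hAv
      rw [← rs_stable G hvW hiso huc hv]
      exact rs_mem_supps G (Set.mem_insert_of_mem _ huc)

end swap2

section counting
variable [Fintype V] (G : SimpleGraph V)

lemma eBetween_singleton_right (A : Set V) (t : V) :
    eBetween G A {t} = degIn G A t := by
  have : {p : V × V | p.1 ∈ A ∧ p.2 ∈ ({t} : Set V) ∧ G.Adj p.1 p.2} =
      (fun a => (a, t)) '' (G.neighborSet t ∩ A) := by
    ext ⟨a, b⟩
    simp only [Set.mem_setOf_eq, Set.mem_singleton_iff, Set.mem_image, Set.mem_inter_iff,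
      mem_neighborSet, Prod.mk.injEq]
    constructor
    · rintro ⟨h1, rfl, h3⟩; exact ⟨a, ⟨h3.symm, h1⟩, rfl, rfl⟩
    · rintro ⟨x, ⟨hx1, hx2⟩, rfl, rfl⟩; exact ⟨hx2, rfl, hx1.symm⟩
  rw [eBetween, this, Set.ncard_image_of_injective _ (fun x y h => (Prod.mk.injEq _ _ _ _ ▸ h).1)]
  rfl

lemma eBetween_singleton_left (a : V) (B : Set V) :
    eBetween G {a} B = degIn G B a := by
  have : {p : V × V | p.1 ∈ ({a} : Set V) ∧ p.2 ∈ B ∧ G.Adj p.1 p.2} =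
      (fun b => (a, b)) '' (G.neighborSet a ∩ B) := by
    ext ⟨x, b⟩
    simp only [Set.mem_setOf_eq, Set.mem_singleton_iff, Set.mem_image, Set.mem_inter_iff,
      mem_neighborSet, Prod.mk.injEq]
    constructor
    · rintro ⟨rfl, h2, h3⟩; exact ⟨b, ⟨h3, h2⟩, rfl, rfl⟩
    · rintro ⟨y, ⟨hy1, hy2⟩, rfl, rfl⟩; exact ⟨rfl, hy2, hy1⟩
  rw [eBetween, this, Set.ncard_image_of_injective _ (fun x y h => (Prod.mk.injEq _ _ _ _ ▸ h).2)]
  rfl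

lemma eBetween_union_right (A B₁ B₂ : Set V) (h : Disjoint B₁ B₂) :
    eBetween G A (B₁ ∪ B₂) = eBetween G A B₁ + eBetween G A B₂ := by
  rw [eBetween, eBetween, eBetween]
  have hset : {p : V × V | p.1 ∈ A ∧ p.2 ∈ B₁ ∪ B₂ ∧ G.Adj p.1 p.2} =
      {p : V × V | p.1 ∈ A ∧ p.2 ∈ B₁ ∧ G.Adj p.1 p.2} ∪
      {p : V × V | p.1 ∈ A ∧ p.2 ∈ B₂ ∧ G.Adj p.1 p.2} := by
    ext ⟨a, b⟩
    simp only [Set.mem_setOf_eq, Set.mem_union]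
    tauto
  rw [hset, Set.ncard_union_eq _ (Set.toFinite _) (Set.toFinite _)]
  rw [Set.disjoint_left]
  rintro ⟨a, b⟩ ⟨-, hb, -⟩ ⟨-, hb', -⟩
  exact Set.disjoint_left.1 h hb hb'

lemma eBetween_union_left (A₁ A₂ B : Set V) (h : Disjoint A₁ A₂) :
    eBetween G (A₁ ∪ A₂) B = eBetween G A₁ B + eBetween G A₂ B := by
  rw [eBetween, eBetween, eBetween]
  have hset : {p : V × V | p.1 ∈ A₁ ∪ A₂ ∧ p.2 ∈ B ∧ G.Adj p.1 p.2} =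
      {p : V × V | p.1 ∈ A₁ ∧ p.2 ∈ B ∧ G.Adj p.1 p.2} ∪
      {p : V × V | p.1 ∈ A₂ ∧ p.2 ∈ B ∧ G.Adj p.1 p.2} := by
    ext ⟨a, b⟩
    simp only [Set.mem_setOf_eq, Set.mem_union]
    tauto
  rw [hset, Set.ncard_union_eq _ (Set.toFinite _) (Set.toFinite _)]
  rw [Set.disjoint_left]
  rintro ⟨a, b⟩ ⟨ha, -, -⟩ ⟨ha', -, -⟩
  exact Set.disjoint_left.1 h ha ha'

lemma eBetween_sUnion_left (Fam : Set (Set V)) (hpd : Fam.PairwiseDisjoint id) (B : Set V) :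
    eBetween G (⋃₀ Fam) B = ∑ᶠ A ∈ Fam, eBetween G A B := by
  revert hpd
  refine Set.Finite.induction_on Fam (Set.toFinite Fam) ?H0 @?H1
  case H0 =>
      intro _
      rw [Set.sUnion_empty, finsum_mem_empty]
      have : {p : V × V | p.1 ∈ (∅ : Set V) ∧ p.2 ∈ B ∧ G.Adj p.1 p.2} = ∅ := by
        ext ⟨a, b⟩; simp
      rw [eBetween, this, Set.ncard_empty]
  case H1 =>
      intro A Ps hA hPs ih hpd
      have hpd' : Ps.PairwiseDisjoint id := hpd.subset (Set.subset_insert _ _)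
      have hd : Disjoint A (⋃₀ Ps) := by
        rw [Set.disjoint_sUnion_right]
        intro b hb
        exact hpd (Set.mem_insert _ _) (Set.mem_insert_of_mem _ hb) (fun h => hA (h ▸ hb))
      rw [Set.sUnion_insert, eBetween_union_left G _ _ _ hd, ih hpd',
        finsum_mem_insert _ hA hPs]

lemma ncard_inter_sUnion (X : Set V) (Fam : Set (Set V)) (hpd : Fam.PairwiseDisjoint id) :
    (X ∩ ⋃₀ Fam).ncard = ∑ᶠ A ∈ Fam, (X ∩ A).ncard := by
  revert hpd
  refine Set.Finite.induction_on Fam (Set.toFinite Fam) ?H0 @?H1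
  case H0 => intro _; rw [Set.sUnion_empty, finsum_mem_empty, Set.inter_empty, Set.ncard_empty]
  case H1 =>
      intro A Ps hA hPs ih hpd
      have hpd' : Ps.PairwiseDisjoint id := hpd.subset (Set.subset_insert _ _)
      have hd : Disjoint A (⋃₀ Ps) := by
        rw [Set.disjoint_sUnion_right]
        intro b hb
        exact hpd (Set.mem_insert _ _) (Set.mem_insert_of_mem _ hb) (fun h => hA (h ▸ hb))
      rw [Set.sUnion_insert, Set.inter_union_distrib_left,
        Set.ncard_union_eq (hd.mono Set.inter_subset_right Set.inter_subset_right)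
          (Set.toFinite _) (Set.toFinite _), ih hpd', finsum_mem_insert _ hA hPs]

lemma even_finsum_mem (Fam : Set (Set V)) (f : Set V → ℕ) (h : ∀ A ∈ Fam, Even (f A)) :
    Even (∑ᶠ A ∈ Fam, f A) := by
  revert h
  refine Set.Finite.induction_on Fam (Set.toFinite Fam) ?H0 @?H1
  case H0 => intro _; rw [finsum_mem_empty]; exact Even.zero
  case H1 =>
      intro A Ps hA hPs ih h
      rw [finsum_mem_insert _ hA hPs]
      exact (h A (Set.mem_insert _ _)).add (ih (fun B hB => h B (Set.mem_insert_of_mem _ hB)))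

lemma ncard_le_finsum (Fam : Set (Set V)) (f : Set V → ℕ) (h : ∀ A ∈ Fam, 1 ≤ f A) :
    Fam.ncard ≤ ∑ᶠ A ∈ Fam, f A := by
  revert h
  refine Set.Finite.induction_on Fam (Set.toFinite Fam) ?H0 @?H1
  case H0 => intro _; rw [finsum_mem_empty, Set.ncard_empty]
  case H1 =>
      intro A Ps hA hPs ih h
      rw [finsum_mem_insert _ hA hPs, Set.ncard_insert_of_notMem hA hPs]
      have h1 := h A (Set.mem_insert _ _)
      have h2 := ih (fun B hB => h B (Set.mem_insert_of_mem _ hB))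
      omega

lemma finsum_eq_ncard_forall_one (Fam : Set (Set V)) (f : Set V → ℕ)
    (h : ∀ A ∈ Fam, 1 ≤ f A) (heq : ∑ᶠ A ∈ Fam, f A = Fam.ncard) :
    ∀ A ∈ Fam, f A = 1 := by
  intro A₀ hA₀
  by_contra hne
  have h2 : 2 ≤ f A₀ := by have := h A₀ hA₀; omega
  have hins : Fam = insert A₀ (Fam \ {A₀}) := by
    rw [Set.insert_diff_singleton, Set.insert_eq_of_mem hA₀]
  have hA₀n : A₀ ∉ Fam \ {A₀} := fun h => h.2 rfl
  have hsum : ∑ᶠ A ∈ Fam, f A = f A₀ + ∑ᶠ A ∈ Fam \ {A₀}, f A := by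
    conv_lhs => rw [hins]
    rw [finsum_mem_insert _ hA₀n (Set.toFinite _)]
  have hcard : Fam.ncard = 1 + (Fam \ {A₀}).ncard := by
    conv_lhs => rw [hins]
    rw [Set.ncard_insert_of_notMem hA₀n (Set.toFinite _)]
    omega
  have hle := ncard_le_finsum (Fam \ {A₀}) f (fun B hB => h B hB.1)
  omega

end counting

lemma csupp_eq_rs (G : SimpleGraph V) {W : Set V} {u : V} (hu : u ∈ W) :
    csupp G W ((G.induce W).connectedComponentMk ⟨u, hu⟩) = rs G W u := by
  ext w
  constructor
  · rintro ⟨⟨w', hw'⟩, hmem, rfl⟩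
    rw [ConnectedComponent.mem_supp_iff, ConnectedComponent.eq] at hmem
    exact ⟨hu, hw', hmem.symm⟩
  · rintro ⟨hu', hw, r⟩
    exact ⟨⟨w, hw⟩, by rw [ConnectedComponent.mem_supp_iff, ConnectedComponent.eq]; exact r.symm,
      rfl⟩

lemma csupp_mem_supps (G : SimpleGraph V) (W : Set V) (C : (G.induce W).ConnectedComponent) :
    csupp G W C ∈ Supps G W := by
  obtain ⟨⟨u, hu⟩, rfl⟩ := C.exists_rep
  exact ⟨u, hu, (csupp_eq_rs G hu).symm⟩

lemma csupp_injective (G : SimpleGraph V) (W : Set V) :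
    Function.Injective (csupp G W) := by
  intro C₁ C₂ he
  obtain ⟨⟨u, hu⟩, rfl⟩ := C₁.exists_rep
  have : u ∈ csupp G W C₂ := by
    rw [← he]
    exact (csupp_eq_rs G hu ▸ mem_rs_self G hu :
      u ∈ csupp G W ((G.induce W).connectedComponentMk ⟨u, hu⟩))
  obtain ⟨⟨u', hu'⟩, hmem, hval⟩ := this
  rw [ConnectedComponent.mem_supp_iff] at hmem
  rw [← hmem]
  congr 1
  exact Subtype.ext hval.symm

/-- bridge: counting components with property `P` of the support equals counting supports -/
lemma ncard_comp_eq [Fintype V] (G : SimpleGraph V) (W : Set V) (P : Set V → Prop) :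
    {C : (G.induce W).ConnectedComponent | P (csupp G W C)}.ncard
      = {A ∈ Supps G W | P A}.ncard := by
  have himg : {A ∈ Supps G W | P A} = csupp G W '' {C | P (csupp G W C)} := by
    ext A
    constructor
    · rintro ⟨⟨u, hu, rfl⟩, hP⟩
      refine ⟨(G.induce W).connectedComponentMk ⟨u, hu⟩, ?_, csupp_eq_rs G hu⟩
      rw [Set.mem_setOf_eq, csupp_eq_rs G hu]
      exact hP
    · rintro ⟨C, hC, rfl⟩
      exact ⟨csupp_mem_supps G W C, hC⟩
  rw [himg, Set.ncard_image_of_injOn ((csupp_injective G W).injOn)]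

lemma finsum_mem_subset_le {α : Type*} (s t : Set α) (hst : s ⊆ t) (ht : t.Finite)
    (f : α → ℕ) : ∑ᶠ i ∈ s, f i ≤ ∑ᶠ i ∈ t, f i := by
  have : t = s ∪ (t \ s) := by rw [Set.union_diff_cancel hst]
  rw [this, finsum_mem_union Set.disjoint_sdiff_right (ht.subset hst) (ht.subset Set.diff_subset)]
  exact Nat.le_add_right _ _

theorem vizing_stmt_11 [Fintype V] (G : SimpleGraph V) (S T : Set V)
    (hG : ¬ HasTwoFactor G) (hmin : IsMinBarrier G S T)
    (hh : ∀ S' T' : Set V, IsMinBarrier G S' T' → hNum G S T ≤ hNum G S' T')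
    (v : V) (hv : v ∈ T)
    (hCv : 2 ≤ {C ∈ oddComps G S T | degIn G (csupp G (S ∪ T)ᶜ C) v = 1}.ncard) :
    ∀ D ∈ {C ∈ oddComps G S T | eBetween G (csupp G (S ∪ T)ᶜ C) T = 1 ∧
        degIn G (csupp G (S ∪ T)ᶜ C) v = 1},
      2 ≤ (csupp G (S ∪ T)ᶜ D).ncard := by
  set W : Set V := (S ∪ T)ᶜ with hWdef
  intro D hD
  by_contra hlt
  push_neg at hlt
  obtain ⟨hDodd', hD1', hDv'⟩ := hD
  have hlt2 : (csupp G W D).ncard < 2 := hlt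
  have hDodd : Odd (eBetween G (csupp G W D) T) := hDodd'
  have hD1 : eBetween G (csupp G W D) T = 1 := hD1'
  have hDv : degIn G (csupp G W D) v = 1 := hDv'
  have hCv2 : 2 ≤ {C : (G.induce W).ConnectedComponent |
      Odd (eBetween G (csupp G W C) T) ∧ degIn G (csupp G W C) v = 1}.ncard := hCv
  clear hlt hDodd' hD1' hDv' hCv
  -- D's support is a singleton {c}
  have hne : (csupp G W D).Nonempty := by
    obtain ⟨⟨u, hu⟩, rfl⟩ := D.exists_rep
    exact ⟨u, (csupp_eq_rs G hu ▸ mem_rs_self G hu :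
      u ∈ csupp G W ((G.induce W).connectedComponentMk ⟨u, hu⟩))⟩
  have hcard1 : (csupp G W D).ncard = 1 := by
    have h1 := Set.ncard_pos (Set.toFinite _) |>.mpr hne
    omega
  obtain ⟨c, hc⟩ := Set.ncard_eq_one.mp hcard1
  have hcsub : csupp G W D ⊆ W := by
    rintro x ⟨y, hy, rfl⟩; exact y.2
  have hcW : c ∈ W := hcsub (hc ▸ rfl)
  have hiso : rs G W c = {c} := by
    obtain ⟨⟨u, hu⟩, rfl⟩ := D.exists_rep
    have h2 : rs G W u = {c} := (csupp_eq_rs G hu).symm.trans hc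
    have hcin : c ∈ rs G W u := h2 ▸ rfl
    rw [rs_eq_of_mem hcin, h2]
  have hdisj : Disjoint S T := hmin.1.1
  have hvS : v ∉ S := fun h => Set.disjoint_left.mp hdisj h hv
  have hvW : v ∉ W := fun h => h (Or.inr hv)
  have hcS : c ∉ S := fun h => hcW (Or.inl h)
  have hcT : c ∉ T := fun h => hcW (Or.inr h)
  have hvc : v ≠ c := fun h => hcT (h ▸ hv)
  have hadj : G.Adj v c := by
    have hne2 : (G.neighborSet v ∩ csupp G W D).Nonempty := by
      apply Set.nonempty_of_ncard_ne_zero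
      rw [show (G.neighborSet v ∩ csupp G W D).ncard = 1 from hDv]
      omega
    obtain ⟨x, hx1, hx2⟩ := hne2
    rw [hc] at hx2
    rwa [hx2] at hx1
  have hSc : Sᶜ = T ∪ W := by
    ext x
    simp only [Set.mem_compl_iff, Set.mem_union, hWdef]
    constructor
    · intro hx
      by_cases hxT : x ∈ T
      · exact Or.inl hxT
      · exact Or.inr (fun h => h.elim hx hxT)
    · rintro (hx | hx)
      · exact fun h => Set.disjoint_left.mp hdisj h hx
      · exact fun h => hx (Or.inl h)
  have hNc : G.neighborSet c ∩ Sᶜ = {v} := by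
    apply Set.Subset.antisymm
    · rintro x ⟨hx1, hx2⟩
      rw [hSc] at hx2
      rcases hx2 with hxT | hxW
      · -- x ∈ T and adjacent to c: must be v since e({c},T) = 1
        have he1 : (G.neighborSet c ∩ T).ncard = 1 := by
          have := hD1
          rw [hc, eBetween_singleton_left] at this
          exact this
        obtain ⟨y, hy⟩ := Set.ncard_eq_one.mp he1
        have hxy : x ∈ ({y} : Set V) := hy ▸ ⟨hx1, hxT⟩
        have hvy : v ∈ ({y} : Set V) := hy ▸ ⟨hadj.symm, hv⟩
        rw [hxy, ← hvy]
        rfl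
      · exfalso
        have : x ∈ rs G W c := adj_mem_rs G hcW hxW hx1
        rw [hiso] at this
        rw [this] at hx1
        exact G.loopless.irrefl c hx1
    · rintro x rfl
      refine ⟨hadj.symm, ?_⟩
      rw [hSc]
      exact Or.inl hv
  -- the swapped pair
  set T' : Set V := insert c (T \ {v}) with hT'def
  set W' : Set V := insert v (W \ {c}) with hW'def
  have hcTv : c ∉ T \ {v} := fun h => hcT h.1
  have hW'eq : (S ∪ T')ᶜ = W' := by
    ext x
    simp only [Set.mem_compl_iff, Set.mem_union, hT'def, hW'def, Set.mem_insert_iff,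
      Set.mem_diff, Set.mem_singleton_iff, hWdef]
    constructor
    · intro hx
      push_neg at hx
      obtain ⟨hx1, hx2, hx3⟩ := hx
      by_cases hxv : x = v
      · exact Or.inl hxv
      · refine Or.inr ⟨?_, hx2⟩
        intro h
        rcases h with h | h
        · exact hx1 h
        · exact hxv (hx3 h)
    · rintro (rfl | ⟨hx1, hx2⟩)
      · push_neg
        exact ⟨hvS, hvc, fun h => rfl⟩
      · push_neg
        exact ⟨fun h => hx1 (Or.inl h), hx2, fun h => absurd (Or.inr h) hx1⟩
  -- support-level families
  set Touch : Set (Set V) :=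
    {A ∈ Supps G W | (A ∩ G.neighborSet v).Nonempty ∧ A ≠ {c}} with hTouchdef
  set OddT : Set (Set V) := {A ∈ Touch | Odd (eBetween G A T)} with hOddTdef
  set Rest : Set (Set V) :=
    {A ∈ Supps G W | A ∩ G.neighborSet v = ∅ ∧ A ≠ {c}} with hRestdef
  set ORest : Set (Set V) := {A ∈ Rest | Odd (eBetween G A T)} with hORestdef
  set K : Set V := rs G W' v with hKdef
  set a : ℕ := OddT.ncard with hadef
  set r : ℕ := ORest.ncard with hrdef
  set k : ℕ := if Odd (eBetween G K T') then 1 else 0 with hkdef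
  -- membership facts about {c}
  have hcSupp : ({c} : Set V) ∈ Supps G W := by
    rw [← hiso]; exact rs_mem_supps G hcW
  have hcodd : Odd (eBetween G ({c} : Set V) T) := by
    rw [show eBetween G ({c} : Set V) T = 1 from hc ▸ hD1]
    exact odd_one
  -- h = 1 + a + r
  have hsplit : {A ∈ Supps G W | Odd (eBetween G A T)} = insert {c} (OddT ∪ ORest) := by
    ext A
    simp only [Set.mem_setOf_eq, Set.mem_insert_iff, Set.mem_union, hOddTdef, hORestdef,
      hTouchdef, hRestdef]
    constructor
    · rintro ⟨hA, hodd⟩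
      by_cases hAc : A = {c}
      · exact Or.inl hAc
      · rcases Set.eq_empty_or_nonempty (A ∩ G.neighborSet v) with hE | hNE
        · exact Or.inr (Or.inr ⟨⟨hA, hE, hAc⟩, hodd⟩)
        · exact Or.inr (Or.inl ⟨⟨hA, hNE, hAc⟩, hodd⟩)
    · rintro (rfl | (⟨⟨hA, -, -⟩, hodd⟩ | ⟨⟨hA, -, -⟩, hodd⟩))
      · exact ⟨hcSupp, hcodd⟩
      · exact ⟨hA, hodd⟩
      · exact ⟨hA, hodd⟩
  have hcnotin : ({c} : Set V) ∉ OddT ∪ ORest := by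
    rintro (⟨⟨-, -, hne'⟩, -⟩ | ⟨⟨-, -, hne'⟩, -⟩) <;> exact hne' rfl
  have hOddTORest : Disjoint OddT ORest := by
    rw [Set.disjoint_left]
    rintro A ⟨⟨-, hNE, -⟩, -⟩ ⟨⟨-, hE, -⟩, -⟩
    rw [hE] at hNE
    exact Set.not_nonempty_empty hNE
  have hhT : hNum G S T = 1 + (a + r) := by
    rw [hNum, show oddComps G S T = {C | Odd (eBetween G (csupp G W C) T)} from rfl,
      ncard_comp_eq G W (fun A => Odd (eBetween G A T)), hsplit,
      Set.ncard_insert_of_notMem hcnotin (Set.toFinite _),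
      Set.ncard_union_eq hOddTORest (Set.toFinite _) (Set.toFinite _)]
    omega
  -- e(A, T') = e(A, T) for A ∈ Rest
  have hRestT' : ∀ A ∈ Rest, eBetween G A T' = eBetween G A T := by
    rintro A ⟨hA, hE, hAc⟩
    have hAW : A ⊆ W := supps_subset G hA
    have hcA : G.neighborSet c ∩ A = ∅ := by
      apply Set.eq_empty_of_subset_empty
      intro x ⟨hx1, hx2⟩
      have hxv : x ∈ ({v} : Set V) := by
        rw [← hNc]
        exact ⟨hx1, fun h => hAW hx2 (Or.inl h)⟩
      rw [hxv] at hx2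
      exact hvW (hAW hx2)
    have hvA : G.neighborSet v ∩ A = ∅ := by
      rw [Set.inter_comm]; exact hE
    have h1 : eBetween G A T' = eBetween G A {c} + eBetween G A (T \ {v}) := by
      rw [hT'def, Set.insert_eq, eBetween_union_right G A _ _ (by
        rw [Set.disjoint_singleton_left]; exact hcTv)]
    have h2 : eBetween G A T = eBetween G A {v} + eBetween G A (T \ {v}) := by
      conv_lhs => rw [show T = {v} ∪ (T \ {v}) by
        rw [← Set.insert_eq, Set.insert_diff_singleton, Set.insert_eq_of_mem hv]]
      rw [eBetween_union_right G A _ _ (by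
        rw [Set.disjoint_singleton_left]; exact fun h => h.2 rfl)]
    rw [h1, h2, eBetween_singleton_right, eBetween_singleton_right, degIn, degIn,
      hcA, hvA, Set.ncard_empty]
  have hvK : v ∈ K := mem_rs_self G (Set.mem_insert _ _)
  have hKnotRest : K ∉ ORest := by
    rintro ⟨⟨hA, -, -⟩, -⟩
    exact hvW (supps_subset G hA hvK)
  -- h' = r + k
  have hhT' : hNum G S T' = r + k := by
    rw [hNum, show oddComps G S T' = {C | Odd (eBetween G (csupp G (S ∪ T')ᶜ C) T')} from rfl,
      ncard_comp_eq G (S ∪ T')ᶜ (fun A => Odd (eBetween G A T'))]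
    have hss : Supps G (S ∪ T')ᶜ = Supps G W' := by rw [hW'eq]
    rw [hss, supps_swap G hvW hiso]
    have hsplit' : {A ∈ insert K Rest | Odd (eBetween G A T')} =
        if Odd (eBetween G K T') then insert K ORest else ORest := by
      split_ifs with hK
      · ext A
        simp only [Set.mem_setOf_eq, Set.mem_insert_iff, hORestdef]
        constructor
        · rintro ⟨rfl | hA, hodd⟩
          · exact Or.inl rfl
          · exact Or.inr ⟨hA, by rwa [hRestT' A hA] at hodd⟩
        · rintro (rfl | ⟨hA, hodd⟩)
          · exact ⟨Or.inl rfl, hK⟩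
          · exact ⟨Or.inr hA, by rwa [hRestT' A hA]⟩
      · ext A
        simp only [Set.mem_setOf_eq, Set.mem_insert_iff, hORestdef]
        constructor
        · rintro ⟨rfl | hA, hodd⟩
          · exact absurd hodd hK
          · exact ⟨hA, by rwa [hRestT' A hA] at hodd⟩
        · rintro ⟨hA, hodd⟩
          exact ⟨Or.inr hA, by rwa [hRestT' A hA]⟩
    rw [show {A ∈ insert K Rest | Odd (eBetween G A T')} =
      if Odd (eBetween G K T') then insert K ORest else ORest from hsplit', hkdef]
    split_ifs with hK
    · rw [Set.ncard_insert_of_notMem hKnotRest (Set.toFinite _)]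
      try omega
    · try omega
  -- a ≥ 1
  have ha1 : 1 ≤ a := by
    rw [ncard_comp_eq G W (fun A => Odd (eBetween G A T) ∧ degIn G A v = 1)] at hCv2
    obtain ⟨A₀, hA₀, hA₀c⟩ := Set.exists_ne_of_one_lt_ncard
      (show 1 < {A ∈ Supps G W | Odd (eBetween G A T) ∧ degIn G A v = 1}.ncard by omega)
      ({c} : Set V)
    obtain ⟨hA₀s, hA₀odd, hA₀deg⟩ := hA₀
    have hA₀T : A₀ ∈ OddT := by
      refine ⟨⟨hA₀s, ?_, hA₀c⟩, hA₀odd⟩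
      rw [Set.inter_comm]
      apply Set.nonempty_of_ncard_ne_zero
      rw [show (G.neighborSet v ∩ A₀).ncard = 1 from hA₀deg]
      omega
    have := Set.ncard_pos (Set.toFinite OddT) |>.mpr ⟨A₀, hA₀T⟩
    omega
  -- decomposition of the degree of v
  set tv : ℕ := (G.neighborSet v ∩ (T \ {v})).ncard with htvdef
  set m : ℕ := (G.neighborSet v ∩ (W \ {c})).ncard with hmdef
  have hdval : degIn G Sᶜ v = tv + (1 + m) := by
    rw [degIn]
    have h1 : G.neighborSet v ∩ Sᶜ =
        (G.neighborSet v ∩ (T \ {v})) ∪ insert c (G.neighborSet v ∩ (W \ {c})) := by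
      ext x
      simp only [Set.mem_inter_iff, Set.mem_union, Set.mem_insert_iff, Set.mem_diff,
        Set.mem_singleton_iff, mem_neighborSet]
      constructor
      · rintro ⟨hx1, hx2⟩
        rw [hSc] at hx2
        rcases hx2 with hxT | hxW
        · exact Or.inl ⟨hx1, hxT, fun h => G.loopless.irrefl v (h ▸ hx1)⟩
        · by_cases hxc : x = c
          · exact Or.inr (Or.inl hxc)
          · exact Or.inr (Or.inr ⟨hx1, hxW, hxc⟩)
      · rintro (⟨hx1, hx2, -⟩ | (rfl | ⟨hx1, hx2, -⟩))
        · refine ⟨hx1, ?_⟩; rw [hSc]; exact Or.inl hx2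
        · refine ⟨hadj, ?_⟩; rw [hSc]; exact Or.inr hcW
        · refine ⟨hx1, ?_⟩; rw [hSc]; exact Or.inr hx2
    rw [h1, Set.ncard_union_eq ?hdisj (Set.toFinite _) (Set.toFinite _),
      Set.ncard_insert_of_notMem (fun h => h.2.2 rfl) (Set.toFinite _)]
    case hdisj =>
      rw [Set.disjoint_left]
      rintro x ⟨-, hxT, -⟩ hx2
      rcases hx2 with rfl | ⟨-, hxW, -⟩
      · exact hcT hxT
      · exact hxW (Or.inr hxT)
    omega
  -- m as a sum over Touch, and Touch.ncard ≤ m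
  have hUTouch : G.neighborSet v ∩ (W \ {c}) = G.neighborSet v ∩ ⋃₀ Touch := by
    ext x
    simp only [Set.mem_inter_iff, Set.mem_sUnion, Set.mem_diff, Set.mem_singleton_iff]
    constructor
    · rintro ⟨hx1, hx2, hx3⟩
      refine ⟨hx1, rs G W x, ⟨rs_mem_supps G hx2, ⟨x, mem_rs_self G hx2, hx1⟩, ?_⟩,
        mem_rs_self G hx2⟩
      intro h
      have := mem_rs_self G hx2
      rw [h] at this
      exact hx3 this
    · rintro ⟨hx1, A, ⟨hA, -, hAc⟩, hxA⟩
      refine ⟨hx1, supps_subset G hA hxA, fun hxc => hAc ?_⟩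
      rw [← rs_eq_of_mem_supps G hA hxA, hxc, hiso]
  have hTouchpd : Touch.PairwiseDisjoint id :=
    (supps_pd G W).subset (fun A hA => hA.1)
  have hmsum : m = ∑ᶠ A ∈ Touch, (G.neighborSet v ∩ A).ncard := by
    rw [hmdef, hUTouch, ncard_inter_sUnion _ _ hTouchpd]
  have hone : ∀ A ∈ Touch, 1 ≤ (G.neighborSet v ∩ A).ncard := by
    rintro A ⟨-, hNE, -⟩
    rw [Set.inter_comm]
    exact Set.ncard_pos (Set.toFinite _) |>.mpr hNE
  have hpm : Touch.ncard ≤ m := hmsum ▸ ncard_le_finsum Touch _ hone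
  have hap : a ≤ Touch.ncard :=
    Set.ncard_le_ncard (fun A hA => hA.1) (Set.toFinite _)
  -- the key inequality a + 2 ≤ degIn G Sᶜ v + k
  have hkey : a + 2 ≤ degIn G Sᶜ v + k := by
    rw [hkdef]
    split_ifs with hK
    · rw [hdval]; omega
    · -- tight case analysis
      by_contra hcon
      push_neg at hcon
      -- hcon : degIn G Sᶜ v + 0 < a + 2
      have htv0 : tv = 0 := by omega
      have hma : m = a := by omega
      have hpa : Touch.ncard = a := by omega
      have htight1 : ∀ A ∈ Touch, (G.neighborSet v ∩ A).ncard = 1 :=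
        finsum_eq_ncard_forall_one Touch _ hone (by rw [← hmsum, hma, ← hpa])
      have htight2 : OddT = Touch :=
        Set.eq_of_subset_of_ncard_le (fun A hA => hA.1) (by omega) (Set.toFinite _)
      -- compute that e(K, T') is odd, contradiction
      apply hK
      have hKsupp : K = {v} ∪ ⋃₀ Touch := by
        rw [hKdef, hW'def, rs_K G hvW hiso, Set.insert_eq]
        congr 1
        ext u
        simp only [Set.mem_setOf_eq, Set.mem_sUnion, Set.mem_diff, Set.mem_singleton_iff]
        constructor
        · rintro ⟨⟨huW, huc⟩, hNE⟩
          exact ⟨rs G W u, ⟨rs_mem_supps G huW, hNE, fun h => huc (by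
            have := mem_rs_self G huW; rw [h] at this; exact this)⟩, mem_rs_self G huW⟩
        · rintro ⟨A, ⟨hA, hNE, hAc⟩, huA⟩
          rw [← rs_eq_of_mem_supps G hA huA] at hNE
          refine ⟨⟨supps_subset G hA huA, fun huc => hAc ?_⟩, hNE⟩
          rw [← rs_eq_of_mem_supps G hA huA, huc, hiso]
      have hvU : Disjoint ({v} : Set V) (⋃₀ Touch) := by
        rw [Set.disjoint_sUnion_right]
        rintro A ⟨hA, -, -⟩
        rw [Set.disjoint_singleton_left]
        exact fun h => hvW (supps_subset G hA h)
      rw [hKsupp, eBetween_union_left G _ _ _ hvU, eBetween_singleton_left,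
        eBetween_sUnion_left G Touch hTouchpd T']
      have hvT' : degIn G T' v = 1 := by
        rw [degIn, hT'def]
        have : G.neighborSet v ∩ insert c (T \ {v}) =
            insert c (G.neighborSet v ∩ (T \ {v})) := by
          ext x
          simp only [Set.mem_inter_iff, Set.mem_insert_iff, mem_neighborSet]
          constructor
          · rintro ⟨hx1, rfl | hx2⟩
            · exact Or.inl rfl
            · exact Or.inr ⟨hx1, hx2⟩
          · rintro (rfl | ⟨hx1, hx2⟩)
            · exact ⟨hadj, Or.inl rfl⟩
            · exact ⟨hx1, Or.inr hx2⟩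
        rw [this]
        have hempty : G.neighborSet v ∩ (T \ {v}) = ∅ := by
          rw [← Set.ncard_eq_zero (Set.toFinite _)]
          omega
        rw [hempty, Set.insert_eq, Set.union_empty, Set.ncard_singleton]
      rw [hvT']
      have heven : Even (∑ᶠ A ∈ Touch, eBetween G A T') := by
        apply even_finsum_mem
        intro A hA
        have hAR : eBetween G A T' = eBetween G A {c} + eBetween G A (T \ {v}) := by
          rw [hT'def, Set.insert_eq, eBetween_union_right G A _ _ (by
            rw [Set.disjoint_singleton_left]; exact hcTv)]
        have hAc0 : eBetween G A {c} = 0 := by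
          rw [eBetween_singleton_right, degIn]
          have : G.neighborSet c ∩ A = ∅ := by
            apply Set.eq_empty_of_subset_empty
            rintro x ⟨hx1, hx2⟩
            have hAW : A ⊆ W := supps_subset G hA.1
            have hxv : x ∈ ({v} : Set V) := by
              rw [← hNc]
              exact ⟨hx1, fun h => hAW hx2 (Or.inl h)⟩
            rw [hxv] at hx2
            exact hvW (hAW hx2)
          rw [this, Set.ncard_empty]
        have hsplitA : eBetween G A T = eBetween G A {v} + eBetween G A (T \ {v}) := by
          conv_lhs => rw [show T = {v} ∪ (T \ {v}) by
            rw [← Set.insert_eq, Set.insert_diff_singleton, Set.insert_eq_of_mem hv]]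
          rw [eBetween_union_right G A _ _ (by
            rw [Set.disjoint_singleton_left]; exact fun h => h.2 rfl)]
        have hAv1 : eBetween G A {v} = 1 := by
          rw [eBetween_singleton_right, degIn]
          exact htight1 A hA
        have hAodd : Odd (eBetween G A T) := by
          rw [← htight2] at hA
          exact hA.2
        rw [hAR, hAc0, zero_add]
        rw [hsplitA, hAv1] at hAodd
        rcases hAodd with ⟨j, hj⟩
        exact ⟨j, by omega⟩
      rcases heven with ⟨j, hj⟩
      exact ⟨j, by omega⟩
  -- cardinalities are preserved
  have hTcard : T'.ncard = T.ncard := by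
    rw [hT'def, Set.ncard_insert_of_notMem hcTv (Set.toFinite _)]
    exact Set.ncard_diff_singleton_add_one hv (Set.toFinite _)
  have hSTcard : (S ∪ T').ncard = (S ∪ T).ncard := by
    have h1 : S ∪ T' = insert c ((S ∪ T) \ {v}) := by
      ext x
      simp only [hT'def, Set.mem_union, Set.mem_insert_iff, Set.mem_diff,
        Set.mem_singleton_iff]
      constructor
      · rintro (hx | rfl | ⟨hx, hxv⟩)
        · exact Or.inr ⟨Or.inl hx, fun h => hvS (h ▸ hx)⟩
        · exact Or.inl rfl
        · exact Or.inr ⟨Or.inr hx, hxv⟩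
      · rintro (rfl | ⟨hx | hx, hxv⟩)
        · exact Or.inr (Or.inl rfl)
        · exact Or.inl hx
        · exact Or.inr (Or.inr ⟨hx, hxv⟩)
    rw [h1, Set.ncard_insert_of_notMem (fun h => hcW h.1) (Set.toFinite _)]
    exact Set.ncard_diff_singleton_add_one (Or.inr hv) (Set.toFinite _)
  -- sum manipulation
  have hfc : degIn G Sᶜ c = 1 := by
    rw [degIn, hNc, Set.ncard_singleton]
  have hTins : T = insert v (T \ {v}) := by
    rw [Set.insert_diff_singleton, Set.insert_eq_of_mem hv]
  have hsum' : (∑ᶠ x ∈ T', (degIn G Sᶜ x : ℤ)) + (degIn G Sᶜ v : ℤ)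
      = (∑ᶠ x ∈ T, (degIn G Sᶜ x : ℤ)) + 1 := by
    rw [hT'def, finsum_mem_insert _ hcTv (Set.toFinite _)]
    conv_rhs => rw [hTins]
    rw [finsum_mem_insert _ (fun (h : v ∈ T \ {v}) => h.2 rfl) (Set.toFinite _), hfc]
    push_cast
    ring
  -- the swapped pair is a barrier
  have hkeyZ : (a : ℤ) + 2 ≤ (degIn G Sᶜ v : ℤ) + (k : ℤ) := by exact_mod_cast hkey
  have hδ : deltaST G S T ≤ -2 := hmin.1.2
  have hbar' : IsBarrier G S T' := by
    refine ⟨?_, ?_⟩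
    · rw [Set.disjoint_left]
      intro x hxS hxT'
      rcases hxT' with rfl | hx
      · exact hcS hxS
      · exact Set.disjoint_left.mp hdisj hxS hx.1
    · rw [deltaST, hhT', hTcard]
      rw [deltaST, hhT] at hδ
      push_cast at hδ ⊢
      linarith [hsum']
  have hmin' : IsMinBarrier G S T' := by
    refine ⟨hbar', fun S'' T'' hb => ?_⟩
    rw [hSTcard]
    exact hmin.2 S'' T'' hb
  have hcontr := hh S T' hmin'
  rw [hhT, hhT'] at hcontr
  have hk1 : k ≤ 1 := by
    rw [hkdef]
    split_ifs <;> omega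
  omega

end VizingTwoFactor
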